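/- arXiv:2510.03373 — 2 statements merged into one kernel-verified Lean document; each statement's English description precedes it below -/
import Mathlib

section
/- The set of numbers whose modified Engel expansion digits have divergent harmonic series has Hausdorff dimension 0; that is, dim_H { E'(c) : c = (c_n)_{n≥1} a strictly increasing sequence of integers with c₁ ≥ 2 and ∑_{n=1}^{∞} 1/c_n = ∞ } = 0. -/
open Filter

noncomputable section

/-- The classical Engel series `E(c) = ∑_{n≥1} 1/(c₁c₂⋯c_n)` (0-based: `c 0 = c₁`). -/
def engel (c : ℕ → ℕ) : ℝ :=
  ∑' n : ℕ, 1 / ∏ i ∈ Finset.range (n + 1), (c i : ℝ)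

/-- The modified Engel series
`E'(c) = 1/c₁ + ∑_{n≥1} 1/((c₁−1)(c₂−1)⋯(c_n−1)·c_{n+1})` (0-based: `c 0 = c₁`). -/
def modEngel (c : ℕ → ℕ) : ℝ :=
  1 / (c 0 : ℝ) +
    ∑' n : ℕ, 1 / ((∏ i ∈ Finset.range (n + 1), ((c i : ℝ) - 1)) * (c (n + 1) : ℝ))

/-- The digit shift `σ(c)_n = c_n + n − 1` (0-based: `σ(c) (n-1) = c (n-1) + (n-1)`). -/
def engelShift (c : ℕ → ℕ) : ℕ → ℕ := fun n => c n + n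

/-- The Pierce series in Perron notation
`Π(c) = ∑_{n≥0} (−1)^n/((c₁−1)⋯(c_n−1)(c_{n+1}−1))` (0-based: `c 0 = c₁`). -/
def pierce (c : ℕ → ℕ) : ℝ :=
  ∑' n : ℕ, (-1 : ℝ) ^ n / ((∏ i ∈ Finset.range n, ((c i : ℝ) - 1)) * ((c n : ℝ) - 1))

/-- The traditional Pierce series `Π̃(d) = ∑_{n≥1} (−1)^{n+1}/(d₁d₂⋯d_n)` (0-based: `d 0 = d₁`). -/
def pierceTrad (d : ℕ → ℕ) : ℝ :=
  ∑' n : ℕ, (-1 : ℝ) ^ n / ∏ i ∈ Finset.range (n + 1), (d i : ℝ)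

end

namespace ModEngelDim

open Finset MeasureTheory

/-- Product of (digits − 1) up to index `n`. -/
noncomputable def P (c : ℕ → ℕ) (n : ℕ) : ℝ := ∏ i ∈ Finset.range (n + 1), ((c i : ℝ) - 1)

noncomputable def term (c : ℕ → ℕ) (k : ℕ) : ℝ := 1 / (P c k * (c (k + 1) : ℝ))

noncomputable def pref (c : ℕ → ℕ) (n : ℕ) : ℝ :=
  1 / (c 0 : ℝ) + ∑ k ∈ Finset.range n, term c k

lemma modEngel_eq (c : ℕ → ℕ) : modEngel c = 1 / (c 0 : ℝ) + ∑' k, term c k := rfl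

lemma two_pow_le_factorial_succ (k : ℕ) : 2 ^ k ≤ Nat.factorial (k+1) := by
  induction k with
  | zero => simp
  | succ k ih =>
    have h2 : 2 ≤ k + 2 := by omega
    calc 2 ^ (k + 1) = 2 * 2 ^ k := by ring
      _ ≤ 2 * Nat.factorial (k+1) := by omega
      _ ≤ (k + 2) * Nat.factorial (k+1) := Nat.mul_le_mul_right _ h2
      _ = Nat.factorial (k+2) := rfl

lemma fact_le_P (c : ℕ → ℕ) (n : ℕ) (hD : ∀ i, i ≤ n → i + 2 ≤ c i) :
    ((Nat.factorial (n+1) : ℕ) : ℝ) ≤ P c n := by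
  rw [← Finset.prod_range_add_one_eq_factorial]
  push_cast
  apply Finset.prod_le_prod
  · intro i _; positivity
  · intro i hi
    have := hD i (by simpa [Nat.lt_succ_iff] using hi)
    have : ((i : ℝ) + 2) ≤ (c i : ℝ) := by exact_mod_cast this
    linarith

lemma P_pos (c : ℕ → ℕ) (n : ℕ) (hD : ∀ i, i ≤ n → i + 2 ≤ c i) : 0 < P c n :=
  lt_of_lt_of_le (by positivity) (fact_le_P c n hD)

lemma P_lb (c : ℕ → ℕ) (n : ℕ) (hD : ∀ i, i ≤ n → i + 2 ≤ c i) :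
    (2 : ℝ) ^ n ≤ P c n := by
  refine le_trans ?_ (fact_le_P c n hD)
  exact_mod_cast two_pow_le_factorial_succ n

lemma term_nonneg (c : ℕ → ℕ) (hD : ∀ i, i + 2 ≤ c i) (k : ℕ) : 0 ≤ term c k := by
  have h1 := P_pos c k (fun i _ => hD i)
  have h2 : (0:ℝ) ≤ (c (k+1) : ℝ) := by positivity
  rw [term]
  positivity

lemma term_le (c : ℕ → ℕ) (hD : ∀ i, i + 2 ≤ c i) (k : ℕ) :
    term c k ≤ (1 / 2) ^ k := by
  have h1 := P_lb c k (fun i _ => hD i)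
  have hc : (1 : ℝ) ≤ (c (k+1) : ℝ) := by
    have := hD (k+1); exact_mod_cast by omega
  have h2 : (2:ℝ) ^ k * 1 ≤ P c k * (c (k+1) : ℝ) := by
    apply mul_le_mul h1 hc (by norm_num) (le_trans (by positivity) h1)
  rw [term, div_pow, one_pow]
  apply one_div_le_one_div_of_le (by positivity)
  simpa using h2

lemma summable_term (c : ℕ → ℕ) (hD : ∀ i, i + 2 ≤ c i) : Summable (term c) :=
  Summable.of_nonneg_of_le (term_nonneg c hD) (term_le c hD)
    (summable_geometric_of_lt_one (by norm_num) (by norm_num))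

lemma modEngel_mem (c : ℕ → ℕ) (hD : ∀ i, i + 2 ≤ c i) (n : ℕ) :
    modEngel c ∈ Set.Icc (pref c n) (pref c n + (P c n)⁻¹) := by
  have hsum := summable_term c hD
  have hdecomp : modEngel c = pref c n + ∑' k, term c (k + n) := by
    rw [modEngel_eq, pref, ← hsum.sum_add_tsum_nat_add n]
    ring
  have htail_lb : 0 ≤ ∑' k, term c (k + n) :=
    tsum_nonneg fun k => term_nonneg c hD _
  have hb : ∀ k, term c (k + n) ≤ (P c n)⁻¹ * (1 / 2) ^ (k + 1) := by
    intro k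
    have hPn := P_pos c n (fun i _ => hD i)
    have hsplit : P c (k + n) = P c n * ∏ i ∈ Finset.range k, ((c (n + 1 + i) : ℝ) - 1) := by
      rw [P, P, show k + n + 1 = (n + 1) + k by omega, Finset.prod_range_add]
    have hR : (2:ℝ) ^ k ≤ ∏ i ∈ Finset.range k, ((c (n + 1 + i) : ℝ) - 1) := by
      calc (2:ℝ) ^ k = ∏ _i ∈ Finset.range k, (2:ℝ) := by
            rw [Finset.prod_const, Finset.card_range]
        _ ≤ _ := by
            apply Finset.prod_le_prod (by intro i _; norm_num)
            intro i _
            have := hD (n + 1 + i)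
            have : ((n:ℝ) + 1 + i + 2) ≤ (c (n + 1 + i) : ℝ) := by exact_mod_cast this
            linarith
    have hc2 : (2:ℝ) ≤ (c (k + n + 1) : ℝ) := by
      have := hD (k + n + 1); exact_mod_cast by omega
    have hge : P c n * 2 ^ (k + 1) ≤ P c (k + n) * (c (k + n + 1) : ℝ) := by
      rw [hsplit]
      calc P c n * 2 ^ (k+1) = (P c n * 2 ^ k) * 2 := by ring
        _ ≤ (P c n * ∏ i ∈ Finset.range k, ((c (n + 1 + i) : ℝ) - 1)) * (c (k + n + 1) : ℝ) := by
            have hprodpos : (0:ℝ) < ∏ i ∈ Finset.range k, ((c (n + 1 + i) : ℝ) - 1) := by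
              calc (0:ℝ) < 2 ^ k := by positivity
                _ ≤ _ := hR
            apply mul_le_mul (by nlinarith) hc2 (by norm_num)
            positivity
    have hpos : (0:ℝ) < P c n * 2 ^ (k + 1) := by positivity
    rw [term]
    calc 1 / (P c (k + n) * (c (k + n + 1) : ℝ)) ≤ 1 / (P c n * 2 ^ (k+1)) :=
          one_div_le_one_div_of_le hpos hge
      _ = (P c n)⁻¹ * (1 / 2) ^ (k + 1) := by
          rw [div_pow, one_pow, one_div, mul_inv, one_div, ← inv_pow]
  have hgeo : Summable (fun k : ℕ => (P c n)⁻¹ * (1 / 2 : ℝ) ^ (k + 1)) := by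
    apply Summable.mul_left
    exact (summable_geometric_of_lt_one (by norm_num) (by norm_num)).comp_injective
      (add_left_injective 1)
  have htail_ub : ∑' k, term c (k + n) ≤ (P c n)⁻¹ := by
    calc ∑' k, term c (k + n) ≤ ∑' k, (P c n)⁻¹ * (1 / 2 : ℝ) ^ (k + 1) :=
          Summable.tsum_le_tsum hb ((summable_nat_add_iff n).mpr hsum) hgeo
      _ = (P c n)⁻¹ * ∑' k, (1 / 2 : ℝ) ^ (k + 1) := tsum_mul_left
      _ ≤ (P c n)⁻¹ * 1 := by
          have h1 : ∑' k : ℕ, (1 / 2 : ℝ) ^ (k + 1) = 1 := by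
            have h2 : ∑' k : ℕ, (1 / 2 : ℝ) ^ (k + 1) = (1/2) * ∑' k : ℕ, (1 / 2 : ℝ) ^ k := by
              rw [← tsum_mul_left]
              congr 1; ext k; rw [pow_succ]; ring
            rw [h2, tsum_geometric_of_lt_one (by norm_num) (by norm_num)]
            norm_num
          rw [h1]
      _ = (P c n)⁻¹ := mul_one _
  constructor
  · rw [hdecomp]; linarith
  · rw [hdecomp]; linarith

end ModEngelDim

namespace ModEngelDim

open Finset MeasureTheory

lemma P_congr (c c' : ℕ → ℕ) (n : ℕ) (h : ∀ i, i ≤ n → c i = c' i) : P c n = P c' n := by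
  apply Finset.prod_congr rfl
  intro i hi
  rw [h i (by simpa [Nat.lt_succ_iff] using hi)]

lemma pref_congr (c c' : ℕ → ℕ) (n : ℕ) (h : ∀ i, i ≤ n → c i = c' i) :
    pref c n = pref c' n := by
  rw [pref, pref, h 0 (Nat.zero_le n)]
  congr 1
  apply Finset.sum_congr rfl
  intro k hk
  have hk' : k < n := by simpa using hk
  rw [term, term, h (k+1) (by omega), P_congr c c' k (fun i hi => h i (by omega))]

/-- Digit size cut-off. -/
noncomputable def Md (d : ℝ) (n : ℕ) : ℕ := ⌈((n + 1 : ℕ) : ℝ) ^ (1 + d / 2)⌉₊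

/-- Extension of a tuple to a full sequence. -/
def extFn {n : ℕ} (f : Fin (n + 1) → ℕ) : ℕ → ℕ :=
  fun i => if h : i < n + 1 then f ⟨i, h⟩ else 0

lemma extFn_apply {n : ℕ} (f : Fin (n + 1) → ℕ) (i : ℕ) (h : i < n + 1) :
    extFn f i = f ⟨i, h⟩ := dif_pos h

def Cond (d : ℝ) (n : ℕ) (f : Fin (n + 1) → ℕ) : Prop :=
  StrictMono f ∧ 2 ≤ f 0 ∧ f (Fin.last n) ≤ Md d n

open scoped Classical in
/-- Cylinders used in the covering at stage `N`. -/
noncomputable def cyl (d : ℝ) (N : ℕ) (p : Σ n : ℕ, Fin (n + 1) → ℕ) : Set ℝ :=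
  if N ≤ p.1 ∧ Cond d p.1 p.2 then
    Set.Icc (pref (extFn p.2) p.1) (pref (extFn p.2) p.1 + (P (extFn p.2) p.1)⁻¹)
  else ∅

lemma cond_lb {d : ℝ} {n : ℕ} {f : Fin (n + 1) → ℕ} (h : Cond d n f) :
    ∀ i, i ≤ n → i + 2 ≤ extFn f i := by
  intro i
  induction i with
  | zero =>
    intro _
    rw [extFn_apply f 0 (by omega)]
    simpa using h.2.1
  | succ i ih =>
    intro hle
    have h1 := ih (by omega)
    have hlt : f ⟨i, by omega⟩ < f ⟨i + 1, by omega⟩ := h.1 (by simp [Fin.mk_lt_mk])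
    rw [extFn_apply f (i+1) (by omega)]
    rw [extFn_apply f i (by omega)] at h1
    omega

lemma cond_ub {d : ℝ} {n : ℕ} {f : Fin (n + 1) → ℕ} (h : Cond d n f) :
    ∀ i, i ≤ n → extFn f i ≤ Md d n := by
  intro i hi
  rw [extFn_apply f i (by omega)]
  exact le_trans (h.1.monotone (by simpa [Fin.le_def, Fin.last] using hi)) h.2.2

lemma subset_cyl (d : ℝ) (hd : 0 < d) (N : ℕ) :
    {x : ℝ | ∃ c : ℕ → ℕ, StrictMono c ∧ 2 ≤ c 0 ∧
        ¬ Summable (fun n : ℕ => 1 / (c n : ℝ)) ∧ x = modEngel c}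
      ⊆ ⋃ p : Σ n : ℕ, Fin (n + 1) → ℕ, cyl d N p := by
  rintro x ⟨c, hc, h2, hns, rfl⟩
  have hD : ∀ i, i + 2 ≤ c i := by
    intro i
    induction i with
    | zero => simpa using h2
    | succ i ih => have := hc (lt_add_one i); omega
  have hex : ∃ n, N ≤ n ∧ c n ≤ Md d n := by
    by_contra hcon
    push_neg at hcon
    apply hns
    rw [← summable_nat_add_iff N]
    have hbase : Summable (fun n : ℕ => ((n : ℝ) ^ (1 + d / 2))⁻¹) :=
      Real.summable_nat_rpow_inv.mpr (by linarith)
    have hcomp : Summable (fun k : ℕ => (((k + (N + 1) : ℕ) : ℝ) ^ (1 + d / 2))⁻¹) := by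
      have := (summable_nat_add_iff (N + 1)).mpr hbase
      simpa using this
    apply Summable.of_nonneg_of_le _ _ hcomp
    · intro k; positivity
    · intro k
      have hpos : (0:ℝ) < ((k + N + 1 : ℕ) : ℝ) ^ (1 + d / 2) := by
        apply Real.rpow_pos_of_pos
        positivity
      have h1 : ((k + N + 1 : ℕ) : ℝ) ^ (1 + d / 2) ≤ ((Md d (k + N) : ℕ) : ℝ) := by
        have := Nat.le_ceil (((k + N + 1 : ℕ) : ℝ) ^ (1 + d / 2))
        exact this
      have h2' : Md d (k + N) < c (k + N) := hcon (k + N) (by omega)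
      have h3 : ((k + N + 1 : ℕ) : ℝ) ^ (1 + d / 2) ≤ (c (k + N) : ℝ) := by
        refine le_trans h1 ?_
        exact_mod_cast h2'.le
      rw [one_div]
      exact inv_anti₀ hpos h3
  obtain ⟨n, hNn, hMn⟩ := hex
  refine Set.mem_iUnion.mpr ⟨⟨n, fun i => c i⟩, ?_⟩
  have hcond : Cond d n (fun i : Fin (n+1) => c i) := by
    refine ⟨?_, ?_, ?_⟩
    · intro a b hab
      exact hc (show (a : ℕ) < (b : ℕ) from hab)
    · simpa using h2
    · simpa using hMn
  rw [cyl, if_pos ⟨hNn, hcond⟩]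
  have hag : ∀ i, i ≤ n → extFn (fun j : Fin (n+1) => c j) i = c i := by
    intro i hi
    rw [extFn_apply _ i (by omega)]
  rw [pref_congr _ c n hag, P_congr _ c n hag]
  exact modEngel_mem c hD n

end ModEngelDim

namespace ModEngelDim

open Finset MeasureTheory ENNReal

/-- The per-level weight. -/
noncomputable def Ew (d : ℝ) (n : ℕ) : ℝ≥0∞ :=
  ((Md d n + 1).choose (n + 1) : ℝ≥0∞) *
    (ENNReal.ofReal ((Nat.factorial (n + 1) : ℝ)⁻¹)) ^ d

lemma Ew_ne_top (d : ℝ) (hd : 0 < d) (n : ℕ) : Ew d n ≠ ⊤ := by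
  apply ENNReal.mul_ne_top (by simp)
  exact ENNReal.rpow_ne_top_of_nonneg hd.le ENNReal.ofReal_ne_top

open scoped Classical in
lemma diam_cyl_le (d : ℝ) (N : ℕ) (p : Σ n : ℕ, Fin (n + 1) → ℕ) :
    EMetric.diam (cyl d N p) ≤
      (if N ≤ p.1 ∧ Cond d p.1 p.2 then
        ENNReal.ofReal ((P (extFn p.2) p.1)⁻¹) else 0) := by
  classical
  rw [cyl]
  split_ifs with h
  · rw [EMetric.diam, Real.ediam_Icc]
    apply le_of_eq
    congr 1
    ring
  · simp [EMetric.diam]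

lemma diam_cyl_le' (d : ℝ) (N : ℕ) (p : Σ n : ℕ, Fin (n + 1) → ℕ) :
    EMetric.diam (cyl d N p) ≤ (2⁻¹ : ℝ≥0∞) ^ N := by
  classical
  refine le_trans (diam_cyl_le d N p) ?_
  split_ifs with h
  · obtain ⟨n, f⟩ := p
    obtain ⟨hN, hcond⟩ := h
    have hD := cond_lb hcond
    have h1 : (P (extFn f) n)⁻¹ ≤ (2:ℝ)⁻¹ ^ N := by
      have hP := P_lb (extFn f) n hD
      have hp2 : (0:ℝ) < 2 ^ n := by positivity
      calc (P (extFn f) n)⁻¹ ≤ ((2:ℝ) ^ n)⁻¹ := inv_anti₀ hp2 hP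
        _ = (2:ℝ)⁻¹ ^ n := by rw [inv_pow]
        _ ≤ (2:ℝ)⁻¹ ^ N := by
            apply pow_le_pow_of_le_one (by norm_num) (by norm_num) hN
    calc ENNReal.ofReal ((P (extFn f) n)⁻¹) ≤ ENNReal.ofReal ((2:ℝ)⁻¹ ^ N) :=
          ENNReal.ofReal_le_ofReal h1
      _ = (2⁻¹ : ℝ≥0∞) ^ N := by
          rw [ENNReal.ofReal_pow (by norm_num)]
          congr 1
          rw [ENNReal.ofReal_inv_of_pos (by norm_num)]
          norm_num
  · simp

lemma card_strictMono_le (n M : ℕ) [DecidablePred fun f : Fin (n+1) → ℕ => StrictMono f] :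
    ((Fintype.piFinset fun _ : Fin (n + 1) => Finset.range (M + 1)).filter
        (fun f => StrictMono f)).card ≤ (M + 1).choose (n + 1) := by
  classical
  have h := Finset.card_le_card_of_injOn
    (s := (Fintype.piFinset fun _ : Fin (n + 1) => Finset.range (M + 1)).filter
        (fun f => StrictMono f))
    (t := (Finset.range (M + 1)).powersetCard (n + 1))
    (fun f : Fin (n+1) → ℕ => Finset.image f Finset.univ) ?_ ?_
  · refine le_trans h ?_
    rw [Finset.card_powersetCard, Finset.card_range]
  · intro f hf
    rw [Finset.mem_coe, Finset.mem_filter] at hf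
    obtain ⟨hbox, hmono⟩ := hf
    rw [Finset.mem_coe, Finset.mem_powersetCard]
    constructor
    · intro x hx
      rw [Finset.mem_image] at hx
      obtain ⟨i, _, rfl⟩ := hx
      exact (Fintype.mem_piFinset.mp hbox) i
    · rw [Finset.card_image_of_injective _ hmono.injective, Finset.card_univ,
        Fintype.card_fin]
  · intro f hf g hg hfg
    simp only [Finset.coe_filter, Set.mem_setOf_eq] at hf hg
    have hcards : (Finset.image f Finset.univ).card = n + 1 := by
      rw [Finset.card_image_of_injective _ hf.2.injective, Finset.card_univ, Fintype.card_fin]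
    have hf' : f = (Finset.image f Finset.univ).orderEmbOfFin hcards :=
      Finset.orderEmbOfFin_unique hcards (fun x => Finset.mem_image_of_mem f (Finset.mem_univ x))
        hf.2
    have hfg' : Finset.image f Finset.univ = Finset.image g Finset.univ := hfg
    have hg' : g = (Finset.image f Finset.univ).orderEmbOfFin hcards := by
      apply Finset.orderEmbOfFin_unique hcards
      · intro x
        rw [hfg']
        exact Finset.mem_image_of_mem g (Finset.mem_univ x)
      · exact hg.2
    rw [hf', hg']

lemma inner_bound (d : ℝ) (hd : 0 < d) (N n : ℕ) :
    ∑' f : Fin (n + 1) → ℕ, EMetric.diam (cyl d N ⟨n, f⟩) ^ d ≤ Ew d n := by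
  classical
  set A : Finset (Fin (n+1) → ℕ) :=
    (Fintype.piFinset fun _ : Fin (n + 1) => Finset.range (Md d n + 1)).filter
      (fun f => StrictMono f) with hA
  have hsupp : ∀ f ∉ A, EMetric.diam (cyl d N ⟨n, f⟩) ^ d = 0 := by
    intro f hf
    rw [cyl]
    split_ifs with h
    · exfalso
      apply hf
      rw [hA, Finset.mem_filter]
      refine ⟨?_, h.2.1⟩
      rw [Fintype.mem_piFinset]
      intro i
      rw [Finset.mem_range, Nat.lt_succ_iff]
      have := cond_ub h.2 i.1 (Nat.lt_succ_iff.mp i.2)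
      rwa [extFn_apply f i.1 i.2, Fin.eta] at this
    · simp [EMetric.diam, ENNReal.zero_rpow_of_pos hd]
  rw [tsum_eq_sum hsupp]
  have hterm : ∀ f ∈ A, EMetric.diam (cyl d N ⟨n, f⟩) ^ d ≤
      (ENNReal.ofReal ((Nat.factorial (n + 1) : ℝ)⁻¹)) ^ d := by
    intro f _
    apply ENNReal.rpow_le_rpow _ hd.le
    refine le_trans (diam_cyl_le d N ⟨n, f⟩) ?_
    split_ifs with h
    · apply ENNReal.ofReal_le_ofReal
      have hD := cond_lb h.2
      have hfac : (0:ℝ) < (Nat.factorial (n+1) : ℝ) := by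
        exact_mod_cast Nat.factorial_pos (n+1)
      exact inv_anti₀ hfac (fact_le_P (extFn f) n hD)
    · simp
  calc ∑ f ∈ A, EMetric.diam (cyl d N ⟨n, f⟩) ^ d
      ≤ A.card • (ENNReal.ofReal ((Nat.factorial (n + 1) : ℝ)⁻¹)) ^ d :=
        Finset.sum_le_card_nsmul _ _ _ hterm
    _ = (A.card : ℝ≥0∞) * _ := by rw [nsmul_eq_mul]
    _ ≤ Ew d n := by
        rw [Ew]
        apply mul_le_mul_left
        exact_mod_cast card_strictMono_le n (Md d n)

lemma stage_bound (d : ℝ) (hd : 0 < d) (N : ℕ) :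
    ∑' p : Σ n : ℕ, Fin (n + 1) → ℕ, EMetric.diam (cyl d N p) ^ d ≤
      ∑' k : ℕ, Ew d (k + N) := by
  rw [ENNReal.tsum_sigma']
  have h1 : ∀ n : ℕ, ∑' f : Fin (n + 1) → ℕ, EMetric.diam (cyl d N ⟨n, f⟩) ^ d ≤
      (if N ≤ n then Ew d n else 0) := by
    intro n
    split_ifs with h
    · exact inner_bound d hd N n
    · apply le_of_eq
      have hempty : ∀ f : Fin (n + 1) → ℕ, cyl d N ⟨n, f⟩ = (∅ : Set ℝ) := by
        intro f
        rw [cyl]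
        exact if_neg (by tauto)
      simp [hempty, EMetric.diam, ENNReal.zero_rpow_of_pos hd]
  calc ∑' n : ℕ, ∑' f : Fin (n + 1) → ℕ, EMetric.diam (cyl d N ⟨n, f⟩) ^ d
      ≤ ∑' n : ℕ, (if N ≤ n then Ew d n else 0) := ENNReal.tsum_le_tsum h1
    _ = ∑' k : ℕ, Ew d (k + N) := by
        have hinj : Function.Injective (fun k : ℕ => k + N) := fun a b h => by simpa using h
        have hsupp : Function.support (fun n : ℕ => if N ≤ n then Ew d n else 0) ⊆
            Set.range (fun k : ℕ => k + N) := by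
          intro n hn
          rw [Function.mem_support] at hn
          by_cases h : N ≤ n
          · exact ⟨n - N, by simp; omega⟩
          · simp [h] at hn
        rw [← hinj.tsum_eq hsupp]
        apply tsum_congr
        intro k
        exact if_pos (by omega)

end ModEngelDim

namespace ModEngelDim

open Finset MeasureTheory ENNReal

lemma fact_lb : ∀ n : ℕ, ((n : ℝ) / Real.exp 1) ^ n ≤ (Nat.factorial n : ℝ) := by
  intro n
  induction n with
  | zero => simp
  | succ k ih =>
    have hek : (0:ℝ) < Real.exp 1 := Real.exp_pos 1
    rcases Nat.eq_zero_or_pos k with hk | hk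
    · subst hk
      have h1 : (1:ℝ) ≤ Real.exp 1 := Real.one_le_exp (by norm_num)
      norm_num
      rw [inv_le_one_iff₀]
      right; exact h1
    · have hkR : (0:ℝ) < (k:ℝ) := by exact_mod_cast hk
      have key : ((k:ℝ) + 1) ^ k ≤ Real.exp 1 * (k:ℝ) ^ k := by
        have h1 : ((k:ℝ) + 1) ^ k = (k:ℝ) ^ k * (1 + 1 / (k:ℝ)) ^ k := by
          rw [← mul_pow]
          congr 1
          field_simp
        have h2 : (1 + 1 / (k:ℝ)) ≤ Real.exp (1 / (k:ℝ)) := by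
          have := Real.add_one_le_exp (1 / (k:ℝ)); linarith
        have h3 : (1 + 1 / (k:ℝ)) ^ k ≤ Real.exp (1 / (k:ℝ)) ^ k :=
          pow_le_pow_left₀ (by positivity) h2 k
        have h4 : Real.exp (1 / (k:ℝ)) ^ k = Real.exp 1 := by
          rw [← Real.exp_nat_mul]
          congr 1
          field_simp
        have h5 : (0:ℝ) ≤ (k:ℝ) ^ k := by positivity
        calc ((k:ℝ) + 1) ^ k = (k:ℝ) ^ k * (1 + 1 / (k:ℝ)) ^ k := h1
          _ ≤ (k:ℝ) ^ k * Real.exp 1 := by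
              apply mul_le_mul_of_nonneg_left _ h5
              rw [← h4]; exact h3
          _ = Real.exp 1 * (k:ℝ) ^ k := mul_comm _ _
      have hexk : (0:ℝ) < Real.exp 1 ^ k := by positivity
      calc (((k + 1 : ℕ) : ℝ) / Real.exp 1) ^ (k + 1)
          = ((k:ℝ) + 1) * ((k:ℝ) + 1) ^ k / (Real.exp 1 ^ k * Real.exp 1) := by
            push_cast
            rw [div_pow]
            ring
        _ ≤ ((k:ℝ) + 1) * (Real.exp 1 * (k:ℝ) ^ k) / (Real.exp 1 ^ k * Real.exp 1) := by
            gcongr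
        _ = ((k:ℝ) + 1) * ((k:ℝ) ^ k / Real.exp 1 ^ k) := by
            field_simp
        _ = ((k:ℝ) + 1) * ((k:ℝ) / Real.exp 1) ^ k := by rw [div_pow]
        _ ≤ ((k:ℝ) + 1) * (Nat.factorial k : ℝ) := by
            apply mul_le_mul_of_nonneg_left ih (by positivity)
        _ = (Nat.factorial (k + 1) : ℝ) := by
            rw [Nat.factorial_succ]
            push_cast
            ring

lemma event (d : ℝ) (hd : 0 < d) :
    ∀ᶠ n : ℕ in atTop,
      (((Md d n + 1).choose (n + 1) : ℕ) : ℝ) * ((Nat.factorial (n + 1) : ℝ)⁻¹) ^ d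
        ≤ (1 / 2) ^ n := by
  have hy : Filter.Tendsto (fun n : ℕ => ((n + 1 : ℕ) : ℝ) ^ (d / 2)) atTop atTop := by
    apply (tendsto_rpow_atTop (by linarith)).comp
    exact tendsto_natCast_atTop_atTop.comp (Filter.tendsto_add_atTop_nat 1)
  filter_upwards [hy.eventually_ge_atTop (6 * Real.exp (1 + d))] with n hn
  set y : ℝ := ((n + 1 : ℕ) : ℝ) with hy_def
  have hy1 : (1 : ℝ) ≤ y := by
    rw [hy_def]; exact_mod_cast Nat.le_add_left 1 n
  have hy0 : (0 : ℝ) < y := by linarith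
  have hex : (0:ℝ) < Real.exp 1 := Real.exp_pos 1
  set F : ℝ := (Nat.factorial (n + 1) : ℝ) with hF_def
  have hF0 : (0:ℝ) < F := by
    rw [hF_def]; exact_mod_cast Nat.factorial_pos (n+1)
  -- bound on Md + 1
  have hm : ((Md d n + 1 : ℕ) : ℝ) ≤ 3 * y ^ (1 + d / 2) := by
    have h1 : ((Md d n : ℕ) : ℝ) < y ^ (1 + d / 2) + 1 := by
      rw [Md]; exact Nat.ceil_lt_add_one (by positivity)
    have h2 : (1:ℝ) ≤ y ^ (1 + d / 2) := Real.one_le_rpow hy1 (by linarith)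
    push_cast
    linarith
  -- base inequality
  have hbase : 2 * ((Md d n + 1 : ℕ) : ℝ) ≤ (y / Real.exp 1) ^ (1 + d) := by
    have hsplit : y ^ (1 + d) = y ^ (1 + d / 2) * y ^ (d / 2) := by
      rw [← Real.rpow_add hy0]
      ring_nf
    have hrw : (y / Real.exp 1) ^ (1 + d) = y ^ (1 + d) / Real.exp (1 + d) := by
      rw [Real.div_rpow hy0.le hex.le, Real.exp_one_rpow]
    have hyp : (0:ℝ) < y ^ (1 + d / 2) := by positivity
    rw [hrw, le_div_iff₀ (Real.exp_pos _)]
    calc 2 * ((Md d n + 1 : ℕ) : ℝ) * Real.exp (1 + d)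
        ≤ 2 * (3 * y ^ (1 + d / 2)) * Real.exp (1 + d) := by
          have h := Real.exp_pos (1 + d)
          nlinarith
      _ = y ^ (1 + d / 2) * (6 * Real.exp (1 + d)) := by ring
      _ ≤ y ^ (1 + d / 2) * y ^ (d / 2) := by nlinarith
      _ = y ^ (1 + d) := hsplit.symm
  -- from choose to powers
  have hCF : (((Md d n + 1).choose (n + 1) : ℕ) : ℝ) * F ≤ ((Md d n + 1 : ℕ) : ℝ) ^ (n + 1) := by
    have hnat : (Md d n + 1).choose (n + 1) * Nat.factorial (n + 1) ≤ (Md d n + 1) ^ (n + 1) := by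
      calc (Md d n + 1).choose (n + 1) * Nat.factorial (n + 1)
          = Nat.factorial (n + 1) * (Md d n + 1).choose (n + 1) := mul_comm _ _
        _ = (Md d n + 1).descFactorial (n + 1) :=
            (Nat.descFactorial_eq_factorial_mul_choose _ _).symm
        _ ≤ (Md d n + 1) ^ (n + 1) := Nat.descFactorial_le_pow _ _
    rw [hF_def]
    exact_mod_cast hnat
  have hfact : (y / Real.exp 1) ^ (n + 1) ≤ F := fact_lb (n + 1)
  -- final chain
  have hgoal : (((Md d n + 1).choose (n + 1) : ℕ) : ℝ) * 2 ^ n ≤ F ^ d := by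
    have hF1d : F ^ (1 + d) = F * F ^ d := by
      rw [Real.rpow_add hF0, Real.rpow_one]
    have hstep1 : ((Md d n + 1 : ℕ) : ℝ) ^ (n + 1) * 2 ^ n ≤ (2 * ((Md d n + 1 : ℕ) : ℝ)) ^ (n + 1) := by
      rw [mul_pow]
      have hMp : (0:ℝ) ≤ ((Md d n + 1 : ℕ) : ℝ) := by positivity
      calc ((Md d n + 1 : ℕ) : ℝ) ^ (n + 1) * 2 ^ n
          ≤ ((Md d n + 1 : ℕ) : ℝ) ^ (n + 1) * 2 ^ (n + 1) := by
            apply mul_le_mul_of_nonneg_left (pow_le_pow_right₀ (by norm_num) (by omega)) (by positivity)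
        _ = 2 ^ (n + 1) * ((Md d n + 1 : ℕ) : ℝ) ^ (n + 1) := mul_comm _ _
    have hstep2 : (2 * ((Md d n + 1 : ℕ) : ℝ)) ^ (n + 1) ≤ ((y / Real.exp 1) ^ (1 + d)) ^ (n + 1) := by
      apply pow_le_pow_left₀ (by positivity) hbase
    have hstep3 : ((y / Real.exp 1) ^ (1 + d)) ^ (n + 1) ≤ F ^ (1 + d) := by
      have hyd : (0:ℝ) ≤ y / Real.exp 1 := by positivity
      calc ((y / Real.exp 1) ^ (1 + d)) ^ (n + 1)
          = ((y / Real.exp 1) ^ (n + 1) : ℝ) ^ (1 + d) := by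
            rw [← Real.rpow_natCast ((y / Real.exp 1) ^ (1 + d)) (n + 1),
              ← Real.rpow_natCast (y / Real.exp 1) (n + 1),
              ← Real.rpow_mul hyd, ← Real.rpow_mul hyd, mul_comm]
        _ ≤ F ^ (1 + d) := by
            apply Real.rpow_le_rpow (by positivity) hfact (by linarith)
    have hchain : ((Md d n + 1 : ℕ) : ℝ) ^ (n + 1) * 2 ^ n ≤ F * F ^ d := by
      rw [← hF1d]
      exact le_trans hstep1 (le_trans hstep2 hstep3)
    -- divide by F
    have hC : (((Md d n + 1).choose (n + 1) : ℕ) : ℝ) ≤ ((Md d n + 1 : ℕ) : ℝ) ^ (n + 1) / F := by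
      rw [le_div_iff₀ hF0]
      exact hCF
    calc (((Md d n + 1).choose (n + 1) : ℕ) : ℝ) * 2 ^ n
        ≤ (((Md d n + 1 : ℕ) : ℝ) ^ (n + 1) / F) * 2 ^ n := by
          apply mul_le_mul_of_nonneg_right hC (by positivity)
      _ = (((Md d n + 1 : ℕ) : ℝ) ^ (n + 1) * 2 ^ n) / F := by ring
      _ ≤ (F * F ^ d) / F := by
          gcongr
      _ = F ^ d := by field_simp
  -- conclude
  have h2n : (0:ℝ) < (2:ℝ) ^ n := by positivity
  have hFd : (0:ℝ) < F ^ d := Real.rpow_pos_of_pos hF0 d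
  rw [Real.inv_rpow hF0.le]
  have hC2 : (((Md d n + 1).choose (n + 1) : ℕ) : ℝ) ≤ F ^ d / 2 ^ n :=
    (le_div_iff₀ h2n).mpr hgoal
  calc (((Md d n + 1).choose (n + 1) : ℕ) : ℝ) * (F ^ d)⁻¹
      ≤ (F ^ d / 2 ^ n) * (F ^ d)⁻¹ := by gcongr
    _ = (2 ^ n)⁻¹ := by
        field_simp
    _ = ((1:ℝ)/2) ^ n := by rw [one_div, inv_pow]

end ModEngelDim

namespace ModEngelDim

open Finset MeasureTheory ENNReal

lemma ofReal_half_pow (n : ℕ) : ENNReal.ofReal (((1:ℝ)/2) ^ n) = (2⁻¹ : ℝ≥0∞) ^ n := by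
  rw [ENNReal.ofReal_pow (by norm_num)]
  congr 1
  rw [one_div, ENNReal.ofReal_inv_of_pos (by norm_num)]
  norm_num

lemma Ew_eq_ofReal (d : ℝ) (hd : 0 < d) (n : ℕ) :
    Ew d n = ENNReal.ofReal
      ((((Md d n + 1).choose (n + 1) : ℕ) : ℝ) * ((Nat.factorial (n + 1) : ℝ)⁻¹) ^ d) := by
  have hfac : (0:ℝ) < (Nat.factorial (n + 1) : ℝ)⁻¹ := by
    have : (0:ℝ) < (Nat.factorial (n + 1) : ℝ) := by exact_mod_cast Nat.factorial_pos (n+1)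
    positivity
  rw [Ew, ENNReal.ofReal_mul (by positivity), ← ENNReal.ofReal_rpow_of_pos hfac,
    ENNReal.ofReal_natCast]

lemma Ew_tsum_ne_top (d : ℝ) (hd : 0 < d) : ∑' n, Ew d n ≠ ⊤ := by
  obtain ⟨N₀, hN₀⟩ := Filter.eventually_atTop.mp (event d hd)
  have hle : ∀ k : ℕ, Ew d (k + N₀) ≤ (2⁻¹ : ℝ≥0∞) ^ (k + N₀) := by
    intro k
    rw [Ew_eq_ofReal d hd, ← ofReal_half_pow]
    exact ENNReal.ofReal_le_ofReal (hN₀ (k + N₀) (by omega))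
  have hsplit : (∑ i ∈ Finset.range N₀, Ew d i) + ∑' k, Ew d (k + N₀) = ∑' n, Ew d n :=
    Summable.sum_add_tsum_nat_add' (f := Ew d) (k := N₀) ENNReal.summable
  rw [← hsplit]
  apply ENNReal.add_ne_top.mpr
  constructor
  · exact ENNReal.sum_ne_top.mpr fun i _ => Ew_ne_top d hd i
  · have hhalf : (2⁻¹ : ℝ≥0∞) ≤ 1 := ENNReal.inv_le_one.mpr one_le_two
    have h1 : ∑' k, Ew d (k + N₀) ≤ ∑' k : ℕ, (2⁻¹ : ℝ≥0∞) ^ k := by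
      refine le_trans (ENNReal.tsum_le_tsum hle) ?_
      apply ENNReal.tsum_le_tsum
      intro k
      rw [pow_add]
      exact mul_le_of_le_one_right' (pow_le_one' hhalf N₀)
    have h2 : ∑' k : ℕ, (2⁻¹ : ℝ≥0∞) ^ k = (1 - 2⁻¹)⁻¹ := ENNReal.tsum_geometric 2⁻¹
    refine (lt_of_le_of_lt h1 ?_).ne
    rw [h2, ENNReal.one_sub_inv_two]
    simp

lemma measure_zero (d : ℝ) (hd : 0 < d) :
    μH[d] {x : ℝ | ∃ c : ℕ → ℕ, StrictMono c ∧ 2 ≤ c 0 ∧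
        ¬ Summable (fun n : ℕ => 1 / (c n : ℝ)) ∧ x = modEngel c} = 0 := by
  have hr : Filter.Tendsto (fun N : ℕ => (2⁻¹ : ℝ≥0∞) ^ N) Filter.atTop (nhds 0) :=
    ENNReal.tendsto_pow_atTop_nhds_zero_of_lt_one (by simp [ENNReal.inv_lt_one])
  have hle := Measure.hausdorffMeasure_le_liminf_tsum d
    {x : ℝ | ∃ c : ℕ → ℕ, StrictMono c ∧ 2 ≤ c 0 ∧
        ¬ Summable (fun n : ℕ => 1 / (c n : ℝ)) ∧ x = modEngel c}
    (fun N : ℕ => (2⁻¹ : ℝ≥0∞) ^ N) hr (cyl d)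
    (Filter.Eventually.of_forall fun N p => diam_cyl_le' d N p)
    (Filter.Eventually.of_forall fun N => subset_cyl d hd N)
  refine le_antisymm (le_trans hle ?_) zero_le
  have htend : Filter.Tendsto (fun N : ℕ => ∑' k : ℕ, Ew d (k + N)) Filter.atTop (nhds 0) :=
    ENNReal.tendsto_sum_nat_add (Ew d) (Ew_tsum_ne_top d hd)
  have hliminf : Filter.liminf (fun N : ℕ => ∑' p : Σ n : ℕ, Fin (n + 1) → ℕ,
      EMetric.diam (cyl d N p) ^ d) Filter.atTop ≤
      Filter.liminf (fun N : ℕ => ∑' k : ℕ, Ew d (k + N)) Filter.atTop := by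
    exact Filter.liminf_le_liminf (Filter.Eventually.of_forall fun N => stage_bound d hd N)
      (by isBoundedDefault) (by isBoundedDefault)
  rw [htend.liminf_eq] at hliminf
  exact hliminf

end ModEngelDim


/-- The set of numbers whose modified Engel digits have divergent harmonic
series has Hausdorff dimension `0`. -/
theorem dimH_modEngel_divergent_harmonic :
    dimH {x : ℝ | ∃ c : ℕ → ℕ, StrictMono c ∧ 2 ≤ c 0 ∧
        ¬ Summable (fun n : ℕ => 1 / (c n : ℝ)) ∧ x = modEngel c} = 0 := by
  refine le_antisymm ?_ zero_le
  refine dimH_le fun d' hd' => ?_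
  rcases eq_or_lt_of_le (zero_le : 0 ≤ d') with h0 | hpos
  · simp [← h0]
  · exfalso
    have hz := ModEngelDim.measure_zero (d' : ℝ) (by exact_mod_cast hpos)
    rw [hz] at hd'
    exact ENNReal.zero_ne_top hd'
end

section
/- Let P be a Perron system and (c₁,…,c_k) a P-admissible word, and let U = (x₁, x₂] where x₁ = S_k (the infimum of the P-cylinder Δ^P_{c₁…c_k}) and x₁ < x₂ ≤ S_k + D_k (the supremum of Δ^P_{c₁…c_k}). Then U can be covered by at most two sets from 𝔓, each of diameter at most x₂ − x₁, and U can also be covered by a single set from 𝔓 of diameter at most 2(x₂ − x₁). -/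
open Set Filter MeasureTheory
open scoped ENNReal

noncomputable section

/-- A Perron system `P = (φ_n)`: `φ₀ = φ []` and `φ_n(c₁,…,c_n) = φ [c₁,…,c_n]`;
all values are positive integers. -/
structure PerronSystem where
  φ : List ℕ → ℕ
  φ_pos : ∀ l, 0 < φ l

/-- `(c₁−1)c₁⋯(c_n−1)c_n` (0-based indexing: `c 0 = c₁`). -/
def qprod (c : ℕ → ℕ) (n : ℕ) : ℝ :=
  ∏ i ∈ Finset.range n, (((c i : ℝ) - 1) * (c i : ℝ))

namespace PerronSystem

variable (P : PerronSystem)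

/-- `r P c 0 = φ₀` and `r P c n = φ_n(c₁,…,c_n)`. -/
def r (c : ℕ → ℕ) (n : ℕ) : ℕ := P.φ (List.ofFn fun j : Fin n => c j)

/-- The word `c₁ … c_k` is P-admissible: `c_i ≥ φ_{i−1}(c₁,…,c_{i−1}) + 1`. -/
def AdmissibleUpTo (c : ℕ → ℕ) (k : ℕ) : Prop := ∀ i < k, P.r c i + 1 ≤ c i

/-- The infinite digit sequence `c` is P-admissible. -/
def Admissible (c : ℕ → ℕ) : Prop := ∀ i, P.r c i + 1 ≤ c i

/-- `r₀ r₁ ⋯ r_{n−1}`. -/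
def rprod (c : ℕ → ℕ) (n : ℕ) : ℝ := ∏ i ∈ Finset.range n, (P.r c i : ℝ)

/-- Diameter `D_k = r₀⋯r_{k−1} / ((c₁−1)c₁⋯(c_k−1)c_k)` of the cylinder with base `c₁…c_k`. -/
def D (c : ℕ → ℕ) (k : ℕ) : ℝ := P.rprod c k / qprod c k

/-- `S_k`, the infimum of the positive Perron cylinder with base `c₁…c_k`. -/
def S (c : ℕ → ℕ) (k : ℕ) : ℝ :=
  ∑ n ∈ Finset.range k, P.rprod c (n + 1) / (qprod c n * (c n : ℝ))

/-- The positive Perron cylinder `Δ^P_{c₁…c_k} = (S_k, S_k + D_k]`. -/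
def cyl (c : ℕ → ℕ) (k : ℕ) : Set ℝ := Ioc (P.S c k) (P.S c k + P.D c k)

/-- `A_k = ∑_{n=0}^{k−1} (−1)^n r₀⋯r_n / ((c₁−1)c₁⋯(c_n−1)c_n (c_{n+1}−1))`. -/
def A (c : ℕ → ℕ) (k : ℕ) : ℝ :=
  ∑ n ∈ Finset.range k, (-1 : ℝ) ^ n * P.rprod c (n + 1) / (qprod c n * ((c n : ℝ) - 1))

/-- The second endpoint `A_k + (−1)^k D_k` of the interval `I_{c₁…c_k}`. -/
def altEnd (c : ℕ → ℕ) (k : ℕ) : ℝ := P.A c k + (-1 : ℝ) ^ k * P.D c k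

/-- The countable set `IS^{P⁻}` of endpoints of the intervals `I_{c₁…c_k}`
(the word of length `0` contributes the endpoints `0` and `1`). -/
def IS : Set ℝ :=
  {x | ∃ (c : ℕ → ℕ) (k : ℕ), P.AdmissibleUpTo c k ∧ (x = P.A c k ∨ x = P.altEnd c k)}

/-- The alternating Perron cylinder `Δ^{P⁻}_{c₁…c_k} = I_{c₁…c_k} \ IS^{P⁻}`. -/
def altCyl (c : ℕ → ℕ) (k : ℕ) : Set ℝ :=
  Ioo (min (P.A c k) (P.altEnd c k)) (max (P.A c k) (P.altEnd c k)) \ P.IS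

/-- The family `𝔓` of all unions of consecutive positive Perron cylinders of the same
rank contained in a single cylinder of the previous rank. -/
def famP : Set (Set ℝ) :=
  {U | ∃ (c : ℕ → ℕ) (k n : ℕ), P.AdmissibleUpTo c k ∧ P.r c k + 1 ≤ n ∧
      ((∃ m, n ≤ m ∧ U = ⋃ i ∈ Finset.Icc n m, P.cyl (Function.update c k i) (k + 1)) ∨
        U = ⋃ i ∈ {j : ℕ | n ≤ j}, P.cyl (Function.update c k i) (k + 1))}

/-- The subfamily `𝔓₁ ⊆ 𝔓` of finite unions. -/
def famP1 : Set (Set ℝ) :=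
  {U | ∃ (c : ℕ → ℕ) (k n m : ℕ), P.AdmissibleUpTo c k ∧ P.r c k + 1 ≤ n ∧ n ≤ m ∧
      U = ⋃ i ∈ Finset.Icc n m, P.cyl (Function.update c k i) (k + 1)}

/-- The family `𝔓⁻` of all unions of consecutive alternating Perron cylinders of the same
rank contained in a single cylinder of the previous rank. -/
def famAlt : Set (Set ℝ) :=
  {U | ∃ (c : ℕ → ℕ) (k n : ℕ), P.AdmissibleUpTo c k ∧ P.r c k + 1 ≤ n ∧
      ((∃ m, n ≤ m ∧ U = ⋃ i ∈ Finset.Icc n m, P.altCyl (Function.update c k i) (k + 1)) ∨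
        U = ⋃ i ∈ {j : ℕ | n ≤ j}, P.altCyl (Function.update c k i) (k + 1))}

/-- The subfamily `𝔓₁⁻ ⊆ 𝔓⁻` of finite unions. -/
def famAlt1 : Set (Set ℝ) :=
  {U | ∃ (c : ℕ → ℕ) (k n m : ℕ), P.AdmissibleUpTo c k ∧ P.r c k + 1 ≤ n ∧ n ≤ m ∧
      U = ⋃ i ∈ Finset.Icc n m, P.altCyl (Function.update c k i) (k + 1)}

/-- The value `Δ^P_c` of the positive Perron expansion with digit sequence `c`. -/
def posValue (c : ℕ → ℕ) : ℝ :=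
  ∑' n : ℕ, P.rprod c (n + 1) / (qprod c n * (c n : ℝ))

/-- The value `Δ^{P⁻}_c` of the alternating Perron expansion with digit sequence `c`. -/
def altValue (c : ℕ → ℕ) : ℝ :=
  ∑' n : ℕ, (-1 : ℝ) ^ n * P.rprod c (n + 1) / (qprod c n * ((c n : ℝ) - 1))

end PerronSystem

/-- The Hausdorff `α`-dimensional measure of `E` with respect to a family of coverings `Φ`. -/
def Hfam (Φ : Set (Set ℝ)) (α : ℝ) (E : Set ℝ) : ℝ≥0∞ :=
  ⨆ (ε : ℝ) (_ : 0 < ε),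
    ⨅ (f : ℕ → Set ℝ) (_ : E ⊆ ⋃ n, f n) (_ : ∀ n, f n ∈ Φ)
      (_ : ∀ n, EMetric.diam (f n) ≤ ENNReal.ofReal ε),
      ∑' n : ℕ, EMetric.diam (f n) ^ α

/-- The Hausdorff dimension of `E` with respect to a family of coverings `Φ`:
`inf {α > 0 : H^α(E, Φ) = 0}` (equal to `∞` if no such `α` exists). -/
def dimFam (Φ : Set (Set ℝ)) (E : Set ℝ) : ℝ≥0∞ :=
  ⨅ (α : ℝ) (_ : 0 < α) (_ : Hfam Φ α E = 0), ENNReal.ofReal α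

end


section Helpers

namespace PerronSystem

variable (P : PerronSystem)

lemma r_update (c : ℕ → ℕ) (k d n : ℕ) (hn : n ≤ k) :
    P.r (Function.update c k d) n = P.r c n := by
  have h : (fun j : Fin n => Function.update c k d j) = fun j : Fin n => c j := by
    funext j
    exact Function.update_of_ne (by have := j.isLt; omega) _ _
  simp only [r, h]

lemma rprod_update (c : ℕ → ℕ) (k d n : ℕ) (hn : n ≤ k + 1) :
    P.rprod (Function.update c k d) n = P.rprod c n := by
  unfold rprod
  refine Finset.prod_congr rfl fun i hi => ?_
  rw [P.r_update c k d i (by simp at hi; omega)]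

lemma qprod_update (c : ℕ → ℕ) (k d n : ℕ) (hn : n ≤ k) :
    qprod (Function.update c k d) n = qprod c n := by
  unfold qprod
  refine Finset.prod_congr rfl fun i hi => ?_
  rw [Function.update_of_ne (by simp at hi; omega) _ _]

lemma adm_update (c : ℕ → ℕ) (k d : ℕ) (hadm : P.AdmissibleUpTo c k)
    (hd : P.r c k + 1 ≤ d) : P.AdmissibleUpTo (Function.update c k d) (k + 1) := by
  intro i hi
  rcases eq_or_lt_of_le (Nat.lt_succ_iff.mp hi) with h | h
  · rw [P.r_update c k d i h.le, h, Function.update_self]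
    exact hd
  · rw [P.r_update c k d i h.le, Function.update_of_ne (by omega) _ _]
    exact hadm i h

lemma rprod_pos (c : ℕ → ℕ) (n : ℕ) : 0 < P.rprod c n := by
  refine Finset.prod_pos fun i _ => ?_
  exact_mod_cast P.φ_pos _

lemma c_two_le (c : ℕ → ℕ) (k : ℕ) (hadm : P.AdmissibleUpTo c k) (i : ℕ) (hi : i < k) :
    2 ≤ c i := by
  have h1 := hadm i hi
  have h2 : 0 < P.r c i := P.φ_pos _
  omega

lemma qprod_pos (c : ℕ → ℕ) (k : ℕ) (hadm : P.AdmissibleUpTo c k) : 0 < qprod c k := by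
  refine Finset.prod_pos fun i hi => ?_
  have h2 : (2 : ℝ) ≤ c i := by exact_mod_cast P.c_two_le c k hadm i (Finset.mem_range.mp hi)
  nlinarith

/-- The key computation: the rank-`k+1` cylinder with last digit `d`. -/
lemma cyl_update (c : ℕ → ℕ) (k : ℕ) (hadm : P.AdmissibleUpTo c k) (d : ℕ)
    (hd : P.r c k + 1 ≤ d) :
    P.cyl (Function.update c k d) (k + 1) =
      Set.Ioc (P.S c k + P.rprod c (k + 1) / qprod c k / d)
        (P.S c k + P.rprod c (k + 1) / qprod c k / ((d : ℝ) - 1)) := by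
  have hr : 0 < P.r c k := P.φ_pos _
  have hd2 : 2 ≤ d := by omega
  have hdR : (2 : ℝ) ≤ (d : ℝ) := by exact_mod_cast hd2
  have hQ : 0 < qprod c k := P.qprod_pos c k hadm
  have hR : 0 < P.rprod c (k + 1) := P.rprod_pos c (k + 1)
  have hS : P.S (Function.update c k d) (k + 1)
      = P.S c k + P.rprod c (k + 1) / (qprod c k * d) := by
    unfold S
    rw [Finset.sum_range_succ]
    congr 1
    · refine Finset.sum_congr rfl fun n hn => ?_
      have hn' : n < k := Finset.mem_range.mp hn
      rw [P.rprod_update c k d (n + 1) (by omega), qprod_update c k d n (by omega),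
        Function.update_of_ne (by omega) _ _]
    · rw [P.rprod_update c k d (k + 1) le_rfl, qprod_update c k d k le_rfl,
        Function.update_self]
  have hDq : qprod (Function.update c k d) (k + 1) = qprod c k * (((d : ℝ) - 1) * d) := by
    unfold qprod
    rw [Finset.prod_range_succ, Function.update_self]
    congr 1
    exact Finset.prod_congr rfl fun i hi =>
      by rw [Function.update_of_ne (by simp at hi; omega) _ _]
  have hD : P.D (Function.update c k d) (k + 1)
      = P.rprod c (k + 1) / (qprod c k * (((d : ℝ) - 1) * d)) := by
    unfold D
    rw [P.rprod_update c k d (k + 1) le_rfl, hDq]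
  have hd0 : (d : ℝ) ≠ 0 := by positivity
  have hd1 : (d : ℝ) - 1 ≠ 0 := by nlinarith
  have hQ0 : qprod c k ≠ 0 := ne_of_gt hQ
  have e1 : P.rprod c (k + 1) / (qprod c k * d) = P.rprod c (k + 1) / qprod c k / d :=
    (div_div _ _ _).symm
  have e2 : P.rprod c (k + 1) / (qprod c k * d)
      + P.rprod c (k + 1) / (qprod c k * (((d : ℝ) - 1) * d))
      = P.rprod c (k + 1) / qprod c k / ((d : ℝ) - 1) := by
    field_simp
    ring
  unfold cyl
  rw [hS, hD, add_assoc, e2, e1]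

/-- The tail union of rank-`k+1` cylinders. -/
lemma tail_union (c : ℕ → ℕ) (k : ℕ) (hadm : P.AdmissibleUpTo c k) (n : ℕ)
    (hn : P.r c k + 1 ≤ n) :
    (⋃ i ∈ {j : ℕ | n ≤ j}, P.cyl (Function.update c k i) (k + 1)) =
      Set.Ioc (P.S c k) (P.S c k + P.rprod c (k + 1) / qprod c k / ((n : ℝ) - 1)) := by
  have hr : 0 < P.r c k := P.φ_pos _
  have hn2 : 2 ≤ n := by omega
  have hQ : 0 < qprod c k := P.qprod_pos c k hadm
  have hR : 0 < P.rprod c (k + 1) := P.rprod_pos c (k + 1)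
  set E : ℝ := P.rprod c (k + 1) / qprod c k with hE
  have hEpos : 0 < E := by positivity
  ext x
  simp only [Set.mem_iUnion, Set.mem_setOf_eq, exists_prop]
  constructor
  · rintro ⟨i, hi, hx⟩
    rw [P.cyl_update c k hadm i (by omega)] at hx
    have hi1 : (1 : ℝ) ≤ (i : ℝ) - 1 := by
      have : 2 ≤ i := by omega
      have : (2 : ℝ) ≤ (i : ℝ) := by exact_mod_cast this
      linarith
    have hni : ((n : ℝ) - 1) ≤ (i : ℝ) - 1 := by
      have : (n : ℝ) ≤ i := by exact_mod_cast hi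
      linarith
    have hn1 : (0 : ℝ) < (n : ℝ) - 1 := by
      have : (2 : ℝ) ≤ (n : ℝ) := by exact_mod_cast hn2
      linarith
    constructor
    · have hip : (0 : ℝ) < (i : ℝ) := by exact_mod_cast (by omega : 0 < i)
      have : 0 < E / (i : ℝ) := div_pos hEpos hip
      linarith [hx.1]
    · have : E / ((i : ℝ) - 1) ≤ E / ((n : ℝ) - 1) :=
        div_le_div_of_nonneg_left hEpos.le hn1 hni
      linarith [hx.2]
  · rintro ⟨hx1, hx2⟩
    set y : ℝ := x - P.S c k with hy
    have hy0 : 0 < y := by simp [hy]; linarith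
    have hn1 : (0 : ℝ) < (n : ℝ) - 1 := by
      have : (2 : ℝ) ≤ (n : ℝ) := by exact_mod_cast hn2
      linarith
    have hyE : y ≤ E / ((n : ℝ) - 1) := by simp only [hy]; linarith
    set i : ℕ := ⌊E / y⌋₊ + 1 with hi
    have hEy : (0 : ℝ) ≤ E / y := by positivity
    have hfl : ((n - 1 : ℕ) : ℝ) ≤ E / y := by
      have hcast : ((n - 1 : ℕ) : ℝ) = (n : ℝ) - 1 := by
        have : 1 ≤ n := by omega
        push_cast [this]; ring
      rw [hcast]
      rw [le_div_iff₀ hy0]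
      calc ((n : ℝ) - 1) * y ≤ ((n : ℝ) - 1) * (E / ((n : ℝ) - 1)) := by
            exact mul_le_mul_of_nonneg_left hyE hn1.le
        _ = E := by field_simp
    have hflge : n - 1 ≤ ⌊E / y⌋₊ := Nat.le_floor hfl
    have hin : n ≤ i := by omega
    refine ⟨i, hin, ?_⟩
    rw [P.cyl_update c k hadm i (by omega)]
    have hiR : (⌊E / y⌋₊ : ℝ) ≤ E / y := Nat.floor_le hEy
    have hiR2 : E / y < (i : ℝ) := by
      have := Nat.lt_floor_add_one (E / y)
      push_cast [hi]
      linarith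
    have hipos : (0 : ℝ) < (i : ℝ) := by
      have : 0 < i := by omega
      exact_mod_cast this
    have hi1pos : (0 : ℝ) < (i : ℝ) - 1 := by
      have : 2 ≤ i := by omega
      have : (2 : ℝ) ≤ (i : ℝ) := by exact_mod_cast this
      linarith
    constructor
    · have : E / (i : ℝ) < y := by
        rw [div_lt_iff₀ hipos]
        calc E = (E / y) * y := by field_simp
          _ < (i : ℝ) * y := by exact mul_lt_mul_of_pos_right hiR2 hy0
          _ = y * i := by ring
      simp only [hy] at this
      linarith
    · have hfloor : ((i : ℝ) - 1) = (⌊E / y⌋₊ : ℝ) := by push_cast [hi]; ring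
      have : y ≤ E / ((i : ℝ) - 1) := by
        rw [le_div_iff₀ hi1pos, hfloor]
        have h1 : (⌊E / y⌋₊ : ℝ) * y ≤ (E / y) * y := mul_le_mul_of_nonneg_right hiR hy0.le
        have h2 : (E / y) * y = E := by field_simp
        linarith
      simp only [hy] at this
      linarith

lemma tail_mem_famP (c : ℕ → ℕ) (k : ℕ) (hadm : P.AdmissibleUpTo c k) (n : ℕ)
    (hn : P.r c k + 1 ≤ n) :
    (⋃ i ∈ {j : ℕ | n ≤ j}, P.cyl (Function.update c k i) (k + 1)) ∈ P.famP :=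
  ⟨c, k, n, hadm, hn, Or.inr rfl⟩

lemma single_mem_famP (c : ℕ → ℕ) (k : ℕ) (hadm : P.AdmissibleUpTo c k) (n : ℕ)
    (hn : P.r c k + 1 ≤ n) :
    P.cyl (Function.update c k n) (k + 1) ∈ P.famP := by
  refine ⟨c, k, n, hadm, hn, Or.inl ⟨n, le_rfl, ?_⟩⟩
  simp

lemma rprod_succ (c : ℕ → ℕ) (k : ℕ) :
    P.rprod c (k + 1) = P.rprod c k * (P.r c k : ℝ) := Finset.prod_range_succ _ _

end PerronSystem

end Helpers

/-- If `U = (x₁, x₂]` with `x₁ = S_k = inf Δ^P_{c₁…c_k}` and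
`x₁ < x₂ ≤ S_k + D_k = sup Δ^P_{c₁…c_k}`, then `U` can be covered by at most two sets from `𝔓`,
each of diameter at most `x₂ − x₁`, and also by a single set from `𝔓` of diameter at most
`2(x₂ − x₁)`. -/
theorem cover_from_inf_of_cylinder (P : PerronSystem) (c : ℕ → ℕ) (k : ℕ)
    (hadm : P.AdmissibleUpTo c k) (x₂ : ℝ)
    (hlt : P.S c k < x₂) (hle : x₂ ≤ P.S c k + P.D c k) :
    (∃ U₁ U₂ : Set ℝ, U₁ ∈ P.famP ∧ U₂ ∈ P.famP ∧
        Set.Ioc (P.S c k) x₂ ⊆ U₁ ∪ U₂ ∧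
        EMetric.diam U₁ ≤ ENNReal.ofReal (x₂ - P.S c k) ∧
        EMetric.diam U₂ ≤ ENNReal.ofReal (x₂ - P.S c k)) ∧
    (∃ U : Set ℝ, U ∈ P.famP ∧ Set.Ioc (P.S c k) x₂ ⊆ U ∧
        EMetric.diam U ≤ ENNReal.ofReal (2 * (x₂ - P.S c k))) := by
  have hr : 0 < P.r c k := P.φ_pos _
  have hrR : (1 : ℝ) ≤ (P.r c k : ℝ) := by exact_mod_cast hr
  have hQ : 0 < qprod c k := P.qprod_pos c k hadm
  have hR : 0 < P.rprod c (k + 1) := P.rprod_pos c (k + 1)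
  have hRk : 0 < P.rprod c k := P.rprod_pos c k
  obtain ⟨E, hEdef, hE⟩ : ∃ E : ℝ, P.rprod c (k + 1) / qprod c k = E ∧ 0 < E :=
    ⟨_, rfl, div_pos hR hQ⟩
  obtain ⟨t, htdef, ht⟩ : ∃ t : ℝ, x₂ - P.S c k = t ∧ 0 < t :=
    ⟨_, rfl, by linarith⟩
  have hDpos : 0 < P.D c k := div_pos hRk hQ
  have hED : E = P.D c k * P.r c k := by
    rw [← hEdef, PerronSystem.D, P.rprod_succ c k, mul_div_right_comm]
  have htD : t ≤ P.D c k := by linarith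
  have hrM : (P.r c k : ℝ) ≤ E / t := by
    have h1 : E / P.D c k ≤ E / t := div_le_div_of_nonneg_left hE.le ht htD
    have h2 : E / P.D c k = P.r c k := by
      rw [hED]; field_simp
    linarith [h1, h2.symm.le, h2.le]
  have htM : t * (E / t) = E := by field_simp
  constructor
  · -- two sets
    set N : ℕ := max ⌈E / t⌉₊ (P.r c k + 1) with hNdef
    have hN2 : P.r c k + 1 ≤ N := le_max_right _ _
    have hNge2 : 2 ≤ N := by omega
    have hNpos : (0 : ℝ) < (N : ℝ) := by exact_mod_cast (by omega : 0 < N)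
    have hN1pos : (0 : ℝ) < (N : ℝ) - 1 := by
      have : (2 : ℝ) ≤ (N : ℝ) := by exact_mod_cast hNge2
      linarith
    have hMN : E / t ≤ (N : ℝ) := by
      refine le_trans (Nat.le_ceil _) ?_
      exact_mod_cast le_max_left _ _
    have hM0 : (0 : ℝ) ≤ E / t := (div_pos hE ht).le
    have hN1M : (N : ℝ) - 1 ≤ E / t := by
      by_cases hc : ⌈E / t⌉₊ ≤ P.r c k
      · have hNc : N = P.r c k + 1 := by rw [hNdef]; omega
        rw [hNc]
        push_cast
        linarith
      · have hNc : N = ⌈E / t⌉₊ := by rw [hNdef]; omega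
        have := Nat.ceil_lt_add_one hM0
        rw [hNc]
        linarith
    have hEN : E / (N : ℝ) ≤ t := by
      rw [div_le_iff₀ hNpos]
      nlinarith [htM]
    have htEN1 : t ≤ E / ((N : ℝ) - 1) := by
      rw [le_div_iff₀ hN1pos]
      nlinarith [htM]
    refine ⟨(⋃ i ∈ {j : ℕ | N + 1 ≤ j}, P.cyl (Function.update c k i) (k + 1)),
      P.cyl (Function.update c k N) (k + 1),
      P.tail_mem_famP c k hadm (N + 1) (by omega),
      P.single_mem_famP c k hadm N hN2 , ?_, ?_, ?_⟩
    · rw [P.tail_union c k hadm (N + 1) (by omega), P.cyl_update c k hadm N hN2, hEdef]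
      have hcast : ((N + 1 : ℕ) : ℝ) - 1 = (N : ℝ) := by push_cast; ring
      rw [hcast]
      intro x hx
      by_cases hcx : x ≤ P.S c k + E / (N : ℝ)
      · exact Or.inl ⟨hx.1, hcx⟩
      · refine Or.inr ⟨lt_of_not_ge hcx, ?_⟩
        have := hx.2
        linarith
    · rw [P.tail_union c k hadm (N + 1) (by omega), hEdef, EMetric.diam, Real.ediam_Ioc]
      apply ENNReal.ofReal_le_ofReal
      have hcast : ((N + 1 : ℕ) : ℝ) - 1 = (N : ℝ) := by push_cast; ring
      rw [hcast]
      linarith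
    · rw [P.cyl_update c k hadm N hN2, hEdef, EMetric.diam, Real.ediam_Ioc]
      apply ENNReal.ofReal_le_ofReal
      have heq : E / ((N : ℝ) - 1) - E / (N : ℝ) = E / (((N : ℝ) - 1) * N) := by
        field_simp
        ring
      have h1 : E / (((N : ℝ) - 1) * N) ≤ E / (N : ℝ) := by
        apply div_le_div_of_nonneg_left hE.le hNpos
        have h2N : (1 : ℝ) ≤ (N : ℝ) - 1 := by
          have : (2 : ℝ) ≤ (N : ℝ) := by exact_mod_cast hNge2
          linarith
        nlinarith [mul_le_mul_of_nonneg_right h2N hNpos.le]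
      linarith
  · -- one set
    set F : ℕ := ⌊E / t⌋₊ with hFdef
    have hrF : P.r c k ≤ F := Nat.le_floor (by exact_mod_cast hrM)
    have hF1 : 1 ≤ F := by omega
    have hFpos : (0 : ℝ) < (F : ℝ) := by exact_mod_cast (by omega : 0 < F)
    have hF1R : (1 : ℝ) ≤ (F : ℝ) := by exact_mod_cast hF1
    have hM0 : (0 : ℝ) ≤ E / t := (div_pos hE ht).le
    have hFM : (F : ℝ) ≤ E / t := Nat.floor_le hM0
    have hMF : E / t < (F : ℝ) + 1 := Nat.lt_floor_add_one _
    have htEF : t ≤ E / (F : ℝ) := by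
      rw [le_div_iff₀ hFpos]
      nlinarith [htM]
    have hEF2t : E / (F : ℝ) ≤ 2 * t := by
      rw [div_le_iff₀ hFpos]
      nlinarith [htM]
    refine ⟨(⋃ i ∈ {j : ℕ | F + 1 ≤ j}, P.cyl (Function.update c k i) (k + 1)),
      P.tail_mem_famP c k hadm (F + 1) (by omega), ?_, ?_⟩
    · rw [P.tail_union c k hadm (F + 1) (by omega), hEdef]
      have hcast : ((F + 1 : ℕ) : ℝ) - 1 = (F : ℝ) := by push_cast; ring
      rw [hcast]
      apply Set.Ioc_subset_Ioc_right
      linarith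
    · rw [P.tail_union c k hadm (F + 1) (by omega), hEdef, EMetric.diam, Real.ediam_Ioc]
      apply ENNReal.ofReal_le_ofReal
      have hcast : ((F + 1 : ℕ) : ℝ) - 1 = (F : ℝ) := by push_cast; ring
      rw [hcast]
      linarith
end
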